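/- For all nonnegative integers n and j, Σ_{k=j}^{n} C(k,j)·H_k = C(n+1,j+1)·(H_{n+1} − 1/(j+1)), where H_m = Σ_{i=1}^{m} 1/i is the m-th harmonic number (H_0 = 0). -/
import Mathlib


theorem sum_choose_mul_harmonic (n j : ℕ) :
    ∑ k ∈ Finset.Icc j n, (k.choose j : ℚ) * harmonic k =
      ((n + 1).choose (j + 1) : ℚ) * (harmonic (n + 1) - 1 / (j + 1)) := by
  induction n with
  | zero =>
    rcases j with _ | j
    · simp [harmonic_succ, harmonic]
    · rw [Finset.Icc_eq_empty (by omega)]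
      rw [Nat.choose_eq_zero_of_lt (by omega)]
      simp
  | succ n ih =>
    rcases le_or_gt j (n + 1) with h | h
    · rw [Finset.sum_Icc_succ_top h, ih]
      have key : ((n : ℚ) + 2) * ((n + 1).choose j) =
          ((n + 2).choose (j + 1)) * ((j : ℚ) + 1) := by
        exact_mod_cast congrArg (Nat.cast (R := ℚ)) (Nat.add_one_mul_choose_eq (n + 1) j)
      have hch : (((n + 2)).choose (j + 1) : ℚ) =
          ((n + 1).choose j : ℚ) + ((n + 1).choose (j + 1) : ℚ) := by
        exact_mod_cast congrArg (Nat.cast (R := ℚ)) (Nat.choose_succ_succ (n + 1) j)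
      have hH : harmonic (n + 2) = harmonic (n + 1) + (↑(n + 2) : ℚ)⁻¹ := harmonic_succ (n + 1)
      push_cast at key hch hH ⊢
      rw [show n + 1 + 1 = n + 2 from rfl] at *
      rw [hch] at key
      rw [hH, hch]
      have h1 : ((j : ℚ) + 1) ≠ 0 := by positivity
      have h2 : ((n : ℚ) + 2) ≠ 0 := by positivity
      have key2 : ((n + 1).choose j : ℚ) * (1 / ((j : ℚ) + 1)) =
          (((n + 1).choose j : ℚ) + ((n + 1).choose (j + 1) : ℚ)) * ((n : ℚ) + 2)⁻¹ := by
        field_simp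
        linear_combination key
      linear_combination key2
    · rw [Finset.Icc_eq_empty (by omega)]
      rw [Nat.choose_eq_zero_of_lt (by omega)]
      simp
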